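/- Let q be a Lie algebra over a field k of characteristic zero, V a q-module, and r = q ⋉ V the semidirect product. Let x ∈ q satisfy: z_q(x) is abelian, q = [q,x] ⊕ z_q(x), V = (x·V) ⊕ V^x (direct sums of subspaces), and V^x = V^{z_q(x)}. Then for every v ∈ V^{z_q(x)}: (i) the centralizer of (x,v) in r equals z_q(x) × V^{z_q(x)}; (ii) this centralizer is an abelian subalgebra of r; (iii) [r,(x,v)] = [q,x] × (x·V), and r = [r,(x,v)] ⊕ z_r((x,v)) (direct sum of subspaces). -/
import Mathlib


/-- Let `q` be a Lie algebra over a field of characteristic zero,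
`V` a `q`-module and `r = q ⋉ V` (with bracket
`[(x,v),(x',v')] = ([x,x'], x·v' − x'·v)`). Let `x ∈ q` satisfy: `z_q(x)` is abelian,
`q = [q,x] ⊕ z_q(x)`, `V = (x·V) ⊕ V^x`, and `V^x = V^{z_q(x)}`. Then for every
`v ∈ V^{z_q(x)}`:
(i) the centraliser of `(x,v)` in `r` equals `z_q(x) × V^{z_q(x)}`;
(ii) this centraliser is an abelian subalgebra of `r`;
(iii) `[r,(x,v)] = [q,x] × (x·V)` and `r = [r,(x,v)] ⊕ z_r((x,v))`. -/
theorem semidirect_generic_centralizer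
    {k L V : Type*} [Field k] [CharZero k] [LieRing L] [LieAlgebra k L]
    [AddCommGroup V] [Module k V] [LieRingModule L V] [LieModule k L V]
    (x : L) (v : V)
    (hab : ∀ y z : L, ⁅x, y⁆ = 0 → ⁅x, z⁆ = 0 → ⁅y, z⁆ = 0)
    (hq1 : ∀ y : L, ∃ a z : L, (∃ w : L, ⁅w, x⁆ = a) ∧ ⁅x, z⁆ = 0 ∧ y = a + z)
    (hq2 : ∀ y : L, (∃ w : L, ⁅w, x⁆ = y) → ⁅x, y⁆ = 0 → y = 0)
    (hV1 : ∀ u : V, ∃ a b : V, (∃ w : V, ⁅x, w⁆ = a) ∧ ⁅x, b⁆ = (0 : V) ∧ u = a + b)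
    (hV2 : ∀ u : V, (∃ w : V, ⁅x, w⁆ = u) → ⁅x, u⁆ = 0 → u = 0)
    (hVx : ∀ u : V, ⁅x, u⁆ = 0 ↔ ∀ z : L, ⁅x, z⁆ = 0 → ⁅z, u⁆ = 0)
    (hv : ∀ z : L, ⁅x, z⁆ = 0 → ⁅z, v⁆ = 0) :
    -- (i) the centraliser of (x,v) in r equals z_q(x) × V^{z_q(x)}
    ({p : L × V | ⁅x, p.1⁆ = 0 ∧ ⁅x, p.2⁆ - ⁅p.1, v⁆ = 0} =
      {p : L × V | ⁅x, p.1⁆ = 0 ∧ ∀ z : L, ⁅x, z⁆ = 0 → ⁅z, p.2⁆ = 0}) ∧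
    -- (ii) the centraliser is an abelian subalgebra of r
    (∀ p q : L × V, (⁅x, p.1⁆ = 0 ∧ ⁅x, p.2⁆ - ⁅p.1, v⁆ = 0) →
      (⁅x, q.1⁆ = 0 ∧ ⁅x, q.2⁆ - ⁅q.1, v⁆ = 0) →
      ⁅p.1, q.1⁆ = 0 ∧ ⁅p.1, q.2⁆ - ⁅q.1, p.2⁆ = 0) ∧
    -- (iii) [r,(x,v)] = [q,x] × (x·V) ...
    ({p : L × V | ∃ y : L, ∃ w : V, p = (⁅y, x⁆, ⁅y, v⁆ - ⁅x, w⁆)} =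
      {p : L × V | (∃ y : L, ⁅y, x⁆ = p.1) ∧ ∃ w : V, ⁅x, w⁆ = p.2}) ∧
    -- ... and r = [r,(x,v)] ⊕ z_r((x,v))
    (∀ p : L × V, ∃ a b : L × V,
      (∃ y : L, ∃ w : V, a = (⁅y, x⁆, ⁅y, v⁆ - ⁅x, w⁆)) ∧
      (⁅x, b.1⁆ = 0 ∧ ⁅x, b.2⁆ - ⁅b.1, v⁆ = 0) ∧ p = a + b) ∧
    (∀ p : L × V, (∃ y : L, ∃ w : V, p = (⁅y, x⁆, ⁅y, v⁆ - ⁅x, w⁆)) →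
      (⁅x, p.1⁆ = 0 ∧ ⁅x, p.2⁆ - ⁅p.1, v⁆ = 0) → p = 0) := by

  have hxv : ⁅x, v⁆ = 0 := (hVx v).mpr hv
  -- key: for every y, ⁅y,v⁆ ∈ x·V
  have key : ∀ y : L, ∃ u : V, ⁅y, v⁆ = ⁅x, u⁆ := by
    intro y
    obtain ⟨a, z, ⟨w, hw⟩, hz, rfl⟩ := hq1 y
    refine ⟨-⁅w, v⁆, ?_⟩
    have hzv := hv z hz
    rw [add_lie, hzv, add_zero, ← hw, lie_lie, hxv, lie_zero, zero_sub, lie_neg]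
  -- centralizer second components lie in V^{z_q(x)}
  have cent : ∀ p : L × V, ⁅x, p.1⁆ = 0 → ⁅x, p.2⁆ - ⁅p.1, v⁆ = 0 →
      ⁅x, p.2⁆ = 0 ∧ ⁅p.1, v⁆ = 0 := by
    intro p h1 h2
    have hfix : ⁅x, ⁅x, p.2⁆⁆ = 0 := by
      have h2' : ⁅x, p.2⁆ = ⁅p.1, v⁆ := sub_eq_zero.mp h2
      rw [h2', leibniz_lie, h1, zero_lie, hxv, lie_zero, add_zero]
    have := hV2 ⁅x, p.2⁆ ⟨p.2, rfl⟩ hfix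
    exact ⟨this, by rw [← sub_eq_zero.mp h2, this]⟩
  refine ⟨?_, ?_, ?_, ?_, ?_⟩
  · ext p
    simp only [Set.mem_setOf_eq]
    constructor
    · rintro ⟨h1, h2⟩
      exact ⟨h1, (hVx p.2).mp (cent p h1 h2).1⟩
    · rintro ⟨h1, h2⟩
      exact ⟨h1, by rw [h2 x (lie_self x), hv p.1 h1, sub_zero]⟩
  · rintro p q ⟨hp1, hp2⟩ ⟨hq1', hq2'⟩
    refine ⟨hab _ _ hp1 hq1', ?_⟩
    have h1 := (hVx q.2).mp (cent q hq1' hq2').1 p.1 hp1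
    have h2 := (hVx p.2).mp (cent p hp1 hp2).1 q.1 hq1'
    rw [h1, h2, sub_zero]
  · ext p
    simp only [Set.mem_setOf_eq]
    constructor
    · rintro ⟨y, w, rfl⟩
      obtain ⟨u, hu⟩ := key y
      exact ⟨⟨y, rfl⟩, ⟨u - w, by rw [lie_sub, ← hu]⟩⟩
    · rintro ⟨⟨y, hy⟩, ⟨w, hw⟩⟩
      obtain ⟨u, hu⟩ := key y
      refine ⟨y, u - w, ?_⟩
      have : ⁅y, v⁆ - ⁅x, u - w⁆ = p.2 := by rw [lie_sub, hu, hw]; abel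
      rw [Prod.ext_iff]
      exact ⟨hy.symm, this.symm⟩
  · intro p
    obtain ⟨a, z, ⟨w, hw⟩, hz, hp1⟩ := hq1 p.1
    obtain ⟨c, b, ⟨u, hu⟩, hb, hp2⟩ := hV1 p.2
    obtain ⟨s, hs⟩ := key w
    refine ⟨(a, c), (z, b), ⟨w, s - u, ?_⟩, ⟨hz, ?_⟩, ?_⟩
    · rw [hw, lie_sub, hs, hu]
      simp
    · rw [hb, hv z hz, sub_zero]
    · rw [Prod.ext_iff]
      exact ⟨hp1, hp2⟩
  · rintro p ⟨y, w, rfl⟩ ⟨h1, h2⟩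
    have hy0 : ⁅y, x⁆ = 0 := hq2 _ ⟨y, rfl⟩ h1
    obtain ⟨u, hu⟩ := key y
    have h2' : ⁅y, v⁆ - ⁅x, w⁆ = 0 := by
      refine hV2 _ ⟨u - w, by rw [lie_sub, hu]⟩ ?_
      have := (cent _ h1 h2).1
      exact this
    rw [Prod.ext_iff]
    exact ⟨hy0, h2'⟩
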